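/- For all integers n ≥ 2 and even i ≥ 2, the Horadam sequence satisfies W_{ni+i} = Σ_{j=0}^{⌊n/2⌋} C(n−j, j) · (−1)^j · V_i^{n−2j} · q^{ij} · W_i − q^i · a · Σ_{j=0}^{⌊(n−1)/2⌋} C(n−j−1, j) · (−1)^j · V_i^{n−2j−1} · q^{ij}, where V is the generalized Lucas sequence with the same parameters p, q and C(m,k) denotes the binomial coefficient. -/

import Mathlib

open Finset

private def hbF (P T : ℤ) (m j : ℕ) : ℤ :=
  ((m - j).choose j : ℤ) * P ^ (m - 2 * j) * T ^ j

/-- Fibonacci-type polynomial sum over a full range. -/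
private def hbS (P T : ℤ) (n : ℕ) : ℤ :=
  ∑ j ∈ range (n + 1), hbF P T n j

private lemma hbS_zero (P T : ℤ) : hbS P T 0 = 1 := by simp [hbS, hbF]

private lemma hbS_one (P T : ℤ) : hbS P T 1 = P := by
  simp [hbS, hbF, Finset.sum_range_succ]

private lemma hbF_zero_of_lt (P T : ℤ) {m j : ℕ} (h : m < 2 * j) : hbF P T m j = 0 := by
  unfold hbF
  rw [Nat.choose_eq_zero_of_lt (by omega)]
  simp

private lemma hb_key (P T : ℤ) (n j : ℕ) :
    hbF P T (n + 2) (j + 1) = P * hbF P T (n + 1) (j + 1) + T * hbF P T n j := by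
  rcases lt_trichotomy n (2 * j) with h | h | h
  · rw [hbF_zero_of_lt P T (by omega), hbF_zero_of_lt P T (by omega),
      hbF_zero_of_lt P T (by omega)]
    ring
  · subst h
    unfold hbF
    rw [show 2 * j + 2 - (j + 1) = j + 1 by omega, show 2 * j + 1 - (j + 1) = j by omega,
      show 2 * j - j = j by omega, Nat.choose_self, Nat.choose_eq_zero_of_lt (by omega),
      Nat.choose_self, show 2 * j + 2 - 2 * (j + 1) = 0 by omega,
      show 2 * j - 2 * j = 0 by omega]
    push_cast
    ring
  · obtain ⟨k, rfl⟩ : ∃ k, n = 2 * j + 1 + k := ⟨n - (2 * j + 1), by omega⟩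
    unfold hbF
    rw [show 2 * j + 1 + k + 2 - (j + 1) = (j + k + 1) + 1 by omega,
      show 2 * j + 1 + k + 1 - (j + 1) = j + k + 1 by omega,
      show 2 * j + 1 + k - j = j + k + 1 by omega,
      show 2 * j + 1 + k + 2 - 2 * (j + 1) = k + 1 by omega,
      show 2 * j + 1 + k + 1 - 2 * (j + 1) = k by omega,
      show 2 * j + 1 + k - 2 * j = k + 1 by omega,
      Nat.choose_succ_succ]
    push_cast
    ring

private lemma hbS_rec (P T : ℤ) (n : ℕ) :
    hbS P T (n + 2) = P * hbS P T (n + 1) + T * hbS P T n := by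
  have A : ∑ j ∈ range (n + 2 + 1), hbF P T (n + 2) j
      = ∑ j ∈ range (n + 2), hbF P T (n + 2) (j + 1) + hbF P T (n + 2) 0 :=
    Finset.sum_range_succ' _ _
  have B : ∑ j ∈ range (n + 2), hbF P T (n + 2) (j + 1)
      = ∑ j ∈ range (n + 2), (P * hbF P T (n + 1) (j + 1) + T * hbF P T n j) :=
    Finset.sum_congr rfl fun j _ => hb_key P T n j
  have C : ∑ j ∈ range (n + 2), (P * hbF P T (n + 1) (j + 1) + T * hbF P T n j)
      = ∑ j ∈ range (n + 2), P * hbF P T (n + 1) (j + 1)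
        + ∑ j ∈ range (n + 2), T * hbF P T n j := Finset.sum_add_distrib
  have D : ∑ j ∈ range (n + 2), P * hbF P T (n + 1) (j + 1)
      = P * ∑ j ∈ range (n + 2), hbF P T (n + 1) (j + 1) := (Finset.mul_sum _ _ _).symm
  have E : ∑ j ∈ range (n + 2), hbF P T (n + 1) (j + 1)
      = ∑ j ∈ range (n + 1), hbF P T (n + 1) (j + 1) + hbF P T (n + 1) (n + 1 + 1) :=
    Finset.sum_range_succ _ _
  have F : ∑ j ∈ range (n + 1 + 1), hbF P T (n + 1) j
      = ∑ j ∈ range (n + 1), hbF P T (n + 1) (j + 1) + hbF P T (n + 1) 0 :=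
    Finset.sum_range_succ' _ _
  have G : ∑ j ∈ range (n + 2), T * hbF P T n j
      = T * ∑ j ∈ range (n + 2), hbF P T n j := (Finset.mul_sum _ _ _).symm
  have H : ∑ j ∈ range (n + 2), hbF P T n j
      = ∑ j ∈ range (n + 1), hbF P T n j + hbF P T n (n + 1) := Finset.sum_range_succ _ _
  have z1 : hbF P T (n + 1) (n + 1 + 1) = 0 := hbF_zero_of_lt P T (by omega)
  have z2 : hbF P T n (n + 1) = 0 := hbF_zero_of_lt P T (by omega)
  have t1 : hbF P T (n + 2) 0 = P * hbF P T (n + 1) 0 := by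
    unfold hbF
    simp [pow_succ]
    ring
  show ∑ j ∈ range (n + 2 + 1), hbF P T (n + 2) j
      = P * ∑ j ∈ range (n + 1 + 1), hbF P T (n + 1) j
        + T * ∑ j ∈ range (n + 1), hbF P T n j
  rw [A, B, C, D, E, F, G, H, z1, z2, t1]
  ring

/-- Closed form for the solution of a second-order recurrence. -/
private lemma hb_closed (P Q : ℤ) (x : ℕ → ℤ)
    (hx : ∀ m, x (m + 2) = P * x (m + 1) - Q * x m) :
    ∀ m, x (m + 2) = hbS P (-Q) (m + 1) * x 1 - Q * x 0 * hbS P (-Q) m := by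
  have key : ∀ m, (x (m + 2) = hbS P (-Q) (m + 1) * x 1 - Q * x 0 * hbS P (-Q) m)
      ∧ (x (m + 3) = hbS P (-Q) (m + 2) * x 1 - Q * x 0 * hbS P (-Q) (m + 1)) := by
    intro m
    induction m with
    | zero =>
      constructor
      · rw [hx 0, hbS_one, hbS_zero]; ring
      · rw [show (0:ℕ) + 3 = 1 + 2 from rfl, hx 1, hx 0, hbS_rec, hbS_one, hbS_zero]; ring
    | succ m ih =>
      refine ⟨ih.2, ?_⟩
      rw [(by omega : m + 1 + 3 = m + 2 + 2), hx (m + 2), ih.2, ih.1,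
        (by omega : m + 1 + 2 = m + 1 + 2), hbS_rec P (-Q) (m + 1),
        (by omega : m + 1 + 1 = m + 2)]
      nth_rewrite 3 [show (m + 2 : ℕ) = m + 2 from rfl]
      rw [hbS_rec P (-Q) m]
      ring
  exact fun m => (key m).1

/-- The shift identity for Horadam sequences. -/
private lemma hb_shift (p q : ℤ) (W V : ℕ → ℤ)
    (hW : ∀ n : ℕ, W (n + 2) = p * W (n + 1) + q * W n)
    (hV0 : V 0 = 2) (hV1 : V 1 = p)
    (hV : ∀ n : ℕ, V (n + 2) = p * V (n + 1) + q * V n) :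
    ∀ i m : ℕ, W (m + i + i) + (-q) ^ i * W m = V i * W (m + i) := by
  have key : ∀ i : ℕ, (∀ m, W (m + i + i) + (-q) ^ i * W m = V i * W (m + i))
      ∧ (∀ m, W (m + (i + 1) + (i + 1)) + (-q) ^ (i + 1) * W m = V (i + 1) * W (m + (i + 1))) := by
    intro i
    induction i with
    | zero =>
      constructor
      · intro m; simp [hV0]; ring
      · intro m
        rw [show m + (0 + 1) + (0 + 1) = m + 2 by ring, hW m, hV1, pow_one]
        ring
    | succ i ih =>
      refine ⟨ih.2, ?_⟩
      intro m
      have h1 := ih.2 (m + 1)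
      have h2 := ih.1 (m + 2)
      have h3 := hW (m + 2 * i + 2)
      have h4 := hW m
      rw [show m + (i + 1 + 1) + (i + 1 + 1) = m + 2 * i + 2 + 2 by ring,
        show m + (i + 1 + 1) = m + 2 + i by ring, hV i]
      rw [show m + 1 + (i + 1) + (i + 1) = m + 2 * i + 3 by ring,
        show m + 1 + (i + 1) = m + 2 + i by ring] at h1
      rw [show m + 2 + i + i = m + 2 * i + 2 by ring] at h2
      rw [show m + 2 * i + 2 + 1 = m + 2 * i + 3 by ring] at h3
      linear_combination h3 + p * h1 + q * h2 - q * (-q) ^ i * h4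
  exact fun i m => (key i).1 m

/-- Horadam binomial sum, even index i. -/
theorem horadam_binomial_even (a b p q : ℤ) (W V : ℕ → ℤ)
    (hW0 : W 0 = a) (hW1 : W 1 = b)
    (hW : ∀ n : ℕ, W (n + 2) = p * W (n + 1) + q * W n)
    (hV0 : V 0 = 2) (hV1 : V 1 = p)
    (hV : ∀ n : ℕ, V (n + 2) = p * V (n + 1) + q * V n)
    (n i : ℕ) (hn : 2 ≤ n) (hi : 2 ≤ i) (heven : Even i) :
    W (n * i + i) =
      (∑ j ∈ Finset.range (n / 2 + 1),
        ((n - j).choose j : ℤ) * (-1 : ℤ) ^ j * V i ^ (n - 2 * j) * q ^ (i * j) * W i) -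
      q ^ i * a * ∑ j ∈ Finset.range ((n - 1) / 2 + 1),
        ((n - j - 1).choose j : ℤ) * (-1 : ℤ) ^ j * V i ^ (n - 2 * j - 1) * q ^ (i * j) := by
  set x : ℕ → ℤ := fun m => W (m * i) with hxdef
  have hneg : (-q) ^ i = q ^ i := heven.neg_pow q
  have hx : ∀ m, x (m + 2) = V i * x (m + 1) - q ^ i * x m := by
    intro m
    have h := hb_shift p q W V hW hV0 hV1 hV i (m * i)
    rw [hneg] at h
    simp only [hxdef]
    rw [show (m + 2) * i = m * i + i + i by ring, show (m + 1) * i = m * i + i by ring]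
    linarith
  have hc := hb_closed (V i) (q ^ i) x hx
  have S_trunc : ∀ m : ℕ, ∑ j ∈ Finset.range (m / 2 + 1),
      ((m - j).choose j : ℤ) * (-1 : ℤ) ^ j * V i ^ (m - 2 * j) * q ^ (i * j)
      = hbS (V i) (-q ^ i) m := by
    intro m
    unfold hbS
    rw [← Finset.sum_subset (Finset.range_subset_range.2 (by omega : m / 2 + 1 ≤ m + 1))
      (fun j hj1 hj2 => by
        have hj : m / 2 + 1 ≤ j := by
          simpa [Finset.mem_range, not_lt] using hj2
        exact hbF_zero_of_lt _ _ (by omega))]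
    refine Finset.sum_congr rfl fun j _ => ?_
    unfold hbF
    rw [neg_pow (q ^ i) j, ← pow_mul]
    ring
  obtain ⟨m, rfl⟩ : ∃ m, n = m + 2 := ⟨n - 2, by omega⟩
  have hc' := hc (m + 1)
  have hx0 : x 0 = a := by simp [hxdef, hW0]
  have hx1 : x 1 = W i := by simp [hxdef]
  rw [(by omega : m + 1 + 2 = m + 3), (by omega : m + 1 + 1 = m + 2), hx0, hx1] at hc'
  have e4 : ∑ j ∈ Finset.range ((m + 2 - 1) / 2 + 1),
      ((m + 2 - j - 1).choose j : ℤ) * (-1 : ℤ) ^ j * V i ^ (m + 2 - 2 * j - 1) * q ^ (i * j)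
      = ∑ j ∈ Finset.range ((m + 1) / 2 + 1),
        ((m + 1 - j).choose j : ℤ) * (-1 : ℤ) ^ j * V i ^ (m + 1 - 2 * j) * q ^ (i * j) := by
    rw [show (m + 2 - 1) / 2 + 1 = (m + 1) / 2 + 1 by omega]
    refine Finset.sum_congr rfl fun j _ => ?_
    rw [show m + 2 - j - 1 = m + 1 - j by omega, show m + 2 - 2 * j - 1 = m + 1 - 2 * j by omega]
  calc W ((m + 2) * i + i) = x (m + 3) := by
        simp only [hxdef]
        congr 1
        ring
    _ = hbS (V i) (-q ^ i) (m + 2) * W i - q ^ i * a * hbS (V i) (-q ^ i) (m + 1) := hc'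
    _ = _ := by
        rw [e4, ← Finset.sum_mul, S_trunc (m + 2), S_trunc (m + 1)]
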